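/- Let k ≥ 1 and m be natural numbers with 1 ≤ m ≤ k, let τ > 0 be real, and let w_0, w_1, …, w_m be real numbers. Define f : ℕ → ℝ by f(x) = Σ_{r=0}^{m} w_r · Σ_{j=0}^{r} (−1)^{r−j} · C(2j,j) · C(k−j, r−j) · C(x+j, 2j). Then the following are equivalent: (1) for every x ∈ {0, 1, …, k−1} there exists an odd integer z_x with τ·(f(x+1) − f(x)) = z_x · π; (2) m ≥ 2^{⌊log₂ k⌋} and there exist integers c_1, …, c_m such that c_j is odd if and only if j is a power of 2 (for j = 1, …, m), and for every r ∈ {1, …, m}, w_r = (π/τ) · Σ_{j=r}^{m} (c_j / C(2j,j)) · C(k−r, j−r). -/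

import Mathlib

open Finset
open scoped Classical



-- alternating sum of binomials, real version
private lemma aux_altsum (d : ℕ) :
    ∑ t ∈ range (d+1), (-1:ℝ)^t * (d.choose t : ℝ) = if d = 0 then 1 else 0 := by
  have h := Int.alternating_sum_range_choose (n := d)
  have h2 := congrArg (fun z : ℤ => (z : ℝ)) h
  push_cast at h2
  simpa using h2

private lemma aux_orth (n d : ℕ) (h : d ≤ n) :
    ∑ t ∈ range (d+1), (-1:ℝ)^t * (n.choose t : ℝ) * ((n-t).choose (d-t) : ℝ)
      = if d = 0 then 1 else 0 := by
  have key : ∀ t ∈ range (d+1),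
      (-1:ℝ)^t * (n.choose t : ℝ) * ((n-t).choose (d-t) : ℝ)
        = (n.choose d : ℝ) * ((-1:ℝ)^t * (d.choose t : ℝ)) := by
    intro t ht
    have htd : t ≤ d := by simpa [Nat.lt_succ_iff] using mem_range.mp ht
    have := Nat.choose_mul (n := n) htd
    have hc : (n.choose d : ℝ) * (d.choose t : ℝ) = (n.choose t : ℝ) * ((n-t).choose (d-t) : ℝ) := by
      exact_mod_cast congrArg (fun z : ℕ => (z : ℝ)) this
    linear_combination (-((-1:ℝ)^t)) * hc
  rw [Finset.sum_congr rfl key, ← Finset.mul_sum, aux_altsum]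
  rcases Nat.eq_zero_or_pos d with rfl | hd
  · simp
  · simp [Nat.pos_iff_ne_zero.mp hd]



private lemma aux_orth2 (n d : ℕ) (h : d ≤ n) :
    ∑ t ∈ range (d+1), (-1:ℝ)^(d-t) * (n.choose t : ℝ) * ((n-t).choose (d-t) : ℝ)
      = if d = 0 then 1 else 0 := by
  have key : ∀ t ∈ range (d+1),
      (-1:ℝ)^(d-t) * (n.choose t : ℝ) * ((n-t).choose (d-t) : ℝ)
        = (-1:ℝ)^d * ((-1:ℝ)^t * (n.choose t : ℝ) * ((n-t).choose (d-t) : ℝ)) := by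
    intro t ht
    have htd : t ≤ d := by simpa [Nat.lt_succ_iff] using mem_range.mp ht
    have h2 : ((-1:ℝ)^t)*((-1:ℝ)^t) = 1 := by
      rw [← pow_add]; exact Even.neg_one_pow ⟨t, rfl⟩
    have h1 : (-1:ℝ)^(d-t) * (-1:ℝ)^t = (-1:ℝ)^d := by
      rw [← pow_add, Nat.sub_add_cancel htd]
    calc (-1:ℝ)^(d-t) * (n.choose t : ℝ) * ((n-t).choose (d-t) : ℝ)
        = ((-1:ℝ)^(d-t)*((-1:ℝ)^t*(-1:ℝ)^t)) * (n.choose t : ℝ) * ((n-t).choose (d-t) : ℝ) := by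
          rw [h2, mul_one]
      _ = (-1:ℝ)^d * ((-1:ℝ)^t * (n.choose t : ℝ) * ((n-t).choose (d-t) : ℝ)) := by
          rw [← mul_assoc, h1]; ring
  rw [Finset.sum_congr rfl key, ← Finset.mul_sum, aux_orth n d h]
  rcases Nat.eq_zero_or_pos d with rfl | hd
  · simp
  · simp [Nat.pos_iff_ne_zero.mp hd]

private lemma aux_tri (a M : ℕ) (g : ℕ → ℕ → ℝ) :
    ∑ r ∈ Icc a M, ∑ j ∈ Icc r M, g r j = ∑ j ∈ Icc a M, ∑ r ∈ Icc a j, g r j := by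
  simp only [← Finset.Ico_add_one_right_eq_Icc]
  exact Finset.sum_Ico_Ico_comm a (M+1) g

private lemma aux_Icc_range (a b : ℕ) (f : ℕ → ℝ) :
    ∑ i ∈ Icc a b, f i = ∑ t ∈ range (b + 1 - a), f (a + t) := by
  rw [← Finset.Ico_add_one_right_eq_Icc, Finset.sum_Ico_eq_sum_range]

private lemma aux_range_Icc (F : ℕ → ℝ) (r : ℕ) (h : F 0 = 0) :
    ∑ j ∈ range (r+1), F j = ∑ j ∈ Icc 1 r, F j := by
  rw [Finset.sum_range_succ', h, add_zero, aux_Icc_range]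
  refine Finset.sum_congr (by norm_num) fun i _ => by rw [Nat.add_comm]

private lemma aux_pascal (x j : ℕ) (hj : 1 ≤ j) :
    ((x+1+j).choose (2*j) : ℝ) - ((x+j).choose (2*j) : ℝ) = ((x+j).choose (2*j-1) : ℝ) := by
  have h1 : x+1+j = (x+j) + 1 := by omega
  have h2 : 2*j = (2*j-1) + 1 := by omega
  rw [h1, h2, Nat.choose_succ_succ]
  push_cast
  ring


private lemma aux_diff {k m : ℕ} (w f : ℕ → ℝ)
    (hf : ∀ x, f x = ∑ r ∈ Finset.range (m + 1), w r *
        ∑ j ∈ Finset.range (r + 1), (-1 : ℝ) ^ (r - j) *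
          (Nat.choose (2 * j) j : ℝ) * (Nat.choose (k - j) (r - j) : ℝ) *
          (Nat.choose (x + j) (2 * j) : ℝ)) (x : ℕ) :
    f (x+1) - f x = ∑ r ∈ Icc 1 m, w r * ∑ j ∈ Icc 1 r, (-1:ℝ)^(r-j) *
          ((2*j).choose j : ℝ) * ((k-j).choose (r-j) : ℝ) * ((x+j).choose (2*j-1) : ℝ) := by
  rw [hf (x+1), hf x, ← Finset.sum_sub_distrib]
  have step1 : ∀ r ∈ range (m+1),
      (w r * ∑ j ∈ range (r+1), (-1:ℝ)^(r-j) * ((2*j).choose j : ℝ) * ((k-j).choose (r-j) : ℝ)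
          * (((x+1)+j).choose (2*j) : ℝ))
      - (w r * ∑ j ∈ range (r+1), (-1:ℝ)^(r-j) * ((2*j).choose j : ℝ) * ((k-j).choose (r-j) : ℝ)
          * ((x+j).choose (2*j) : ℝ))
      = w r * ∑ j ∈ Icc 1 r, (-1:ℝ)^(r-j) * ((2*j).choose j : ℝ) * ((k-j).choose (r-j) : ℝ)
          * ((x+j).choose (2*j-1) : ℝ) := by
    intro r _
    rw [← mul_sub, ← Finset.sum_sub_distrib]
    congr 1
    rw [aux_range_Icc _ r (by simp)]
    refine Finset.sum_congr rfl fun j hj => ?_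
    have hj1 : 1 ≤ j := (mem_Icc.mp hj).1
    have hp := aux_pascal x j hj1
    linear_combination ((-1:ℝ)^(r-j) * ((2*j).choose j : ℝ) * ((k-j).choose (r-j) : ℝ)) * hp
  rw [Finset.sum_congr rfl step1]
  exact aux_range_Icc _ m (by simp)

private lemma aux_L1 {k m : ℕ} (hmk : m ≤ k) (γ w : ℕ → ℝ)
    (hw : ∀ r ∈ Icc 1 m, w r = ∑ j ∈ Icc r m, γ j / ((2*j).choose j : ℝ) * ((k-r).choose (j-r) : ℝ))
    (x : ℕ) :
    ∑ r ∈ Icc 1 m, w r * (∑ i ∈ Icc 1 r, (-1:ℝ)^(r-i) * ((2*i).choose i : ℝ)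
        * ((k-i).choose (r-i) : ℝ) * ((x+i).choose (2*i-1) : ℝ))
      = ∑ j ∈ Icc 1 m, γ j * ((x+j).choose (2*j-1) : ℝ) := by
  have hB : ∀ i : ℕ, ((2*i).choose i : ℝ) ≠ 0 := fun i =>
    Nat.cast_ne_zero.mpr (Nat.choose_pos (by omega)).ne'
  calc
    ∑ r ∈ Icc 1 m, w r * (∑ i ∈ Icc 1 r, (-1:ℝ)^(r-i) * ((2*i).choose i : ℝ)
        * ((k-i).choose (r-i) : ℝ) * ((x+i).choose (2*i-1) : ℝ))
      = ∑ r ∈ Icc 1 m, ∑ i ∈ Icc 1 r, ∑ j ∈ Icc r m,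
          (γ j / ((2*j).choose j : ℝ) * ((k-r).choose (j-r) : ℝ)) *
          ((-1:ℝ)^(r-i) * ((2*i).choose i : ℝ) * ((k-i).choose (r-i) : ℝ)
            * ((x+i).choose (2*i-1) : ℝ)) := by
        refine Finset.sum_congr rfl fun r hr => ?_
        rw [hw r hr, Finset.sum_mul_sum, Finset.sum_comm]
    _ = ∑ i ∈ Icc 1 m, ∑ r ∈ Icc i m, ∑ j ∈ Icc r m,
          (γ j / ((2*j).choose j : ℝ) * ((k-r).choose (j-r) : ℝ)) *
          ((-1:ℝ)^(r-i) * ((2*i).choose i : ℝ) * ((k-i).choose (r-i) : ℝ)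
            * ((x+i).choose (2*i-1) : ℝ)) := (aux_tri 1 m _).symm
    _ = ∑ i ∈ Icc 1 m, ∑ j ∈ Icc i m, ∑ r ∈ Icc i j,
          (γ j / ((2*j).choose j : ℝ) * ((k-r).choose (j-r) : ℝ)) *
          ((-1:ℝ)^(r-i) * ((2*i).choose i : ℝ) * ((k-i).choose (r-i) : ℝ)
            * ((x+i).choose (2*i-1) : ℝ)) := by
        exact Finset.sum_congr rfl fun i _ => aux_tri i m _
    _ = ∑ i ∈ Icc 1 m, ∑ j ∈ Icc i m,
          (if j = i then γ i * ((x+i).choose (2*i-1) : ℝ) else 0) := by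
        refine Finset.sum_congr rfl fun i hi => Finset.sum_congr rfl fun j hj => ?_
        obtain ⟨hi1, him⟩ := mem_Icc.mp hi
        obtain ⟨hij, hjm⟩ := mem_Icc.mp hj
        have hre : ∀ r ∈ Icc i j,
            (γ j / ((2*j).choose j : ℝ) * ((k-r).choose (j-r) : ℝ)) *
            ((-1:ℝ)^(r-i) * ((2*i).choose i : ℝ) * ((k-i).choose (r-i) : ℝ)
              * ((x+i).choose (2*i-1) : ℝ))
            = (γ j / ((2*j).choose j : ℝ) * ((2*i).choose i : ℝ)
                * ((x+i).choose (2*i-1) : ℝ)) *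
              ((-1:ℝ)^(r-i) * ((k-i).choose (r-i) : ℝ) * ((k-r).choose (j-r) : ℝ)) :=
          fun r _ => by ring
        rw [Finset.sum_congr rfl hre, ← Finset.mul_sum]
        have hidx : ∑ r ∈ Icc i j, (-1:ℝ)^(r-i) * ((k-i).choose (r-i):ℝ) * ((k-r).choose (j-r):ℝ)
            = ∑ t ∈ range ((j-i)+1), (-1:ℝ)^t * ((k-i).choose t : ℝ)
                * (((k-i)-t).choose ((j-i)-t) : ℝ) := by
          rw [aux_Icc_range]
          have he : j + 1 - i = j - i + 1 := by omega
          rw [he]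
          refine Finset.sum_congr rfl fun t _ => ?_
          have h1 : i + t - i = t := by omega
          have h2 : k - (i+t) = k - i - t := by omega
          have h3 : j - (i+t) = j - i - t := by omega
          rw [h1, h2, h3]
        rw [hidx, aux_orth (k-i) (j-i) (by omega)]
        by_cases hji : j = i
        · subst hji
          have : j - j = 0 := by omega
          rw [this, if_pos rfl, if_pos rfl, mul_one, div_mul_cancel₀ _ (hB j)]
        · have h0 : ¬ (j - i = 0) := by omega
          rw [if_neg h0, if_neg hji, mul_zero]
    _ = ∑ j ∈ Icc 1 m, γ j * ((x+j).choose (2*j-1) : ℝ) := by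
        refine Finset.sum_congr rfl fun i hi => ?_
        obtain ⟨hi1, him⟩ := mem_Icc.mp hi
        rw [Finset.sum_ite_eq' (Icc i m) i (fun _ => γ i * ((x+i).choose (2*i-1) : ℝ))]
        simp [mem_Icc, him]

private lemma aux_L2 {k m : ℕ} (hmk : m ≤ k) (w : ℕ → ℝ) (r : ℕ) (hr : r ∈ Icc 1 m) :
    w r = ∑ j ∈ Icc r m,
      (((2*j).choose j : ℝ) * ∑ s ∈ Icc j m, (-1:ℝ)^(s-j) * ((k-j).choose (s-j) : ℝ) * w s)
        / ((2*j).choose j : ℝ) * ((k-r).choose (j-r) : ℝ) := by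
  have hB : ∀ i : ℕ, ((2*i).choose i : ℝ) ≠ 0 := fun i =>
    Nat.cast_ne_zero.mpr (Nat.choose_pos (by omega)).ne'
  obtain ⟨hr1, hrm⟩ := mem_Icc.mp hr
  symm
  calc
    ∑ j ∈ Icc r m,
      (((2*j).choose j : ℝ) * ∑ s ∈ Icc j m, (-1:ℝ)^(s-j) * ((k-j).choose (s-j) : ℝ) * w s)
        / ((2*j).choose j : ℝ) * ((k-r).choose (j-r) : ℝ)
      = ∑ j ∈ Icc r m, ∑ s ∈ Icc j m,
          w s * ((-1:ℝ)^(s-j) * ((k-r).choose (j-r) : ℝ) * ((k-j).choose (s-j) : ℝ)) := by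
        refine Finset.sum_congr rfl fun j _ => ?_
        rw [mul_div_cancel_left₀ _ (hB j), Finset.sum_mul]
        exact Finset.sum_congr rfl fun s _ => by ring
    _ = ∑ s ∈ Icc r m, ∑ j ∈ Icc r s,
          w s * ((-1:ℝ)^(s-j) * ((k-r).choose (j-r) : ℝ) * ((k-j).choose (s-j) : ℝ)) :=
        aux_tri r m _
    _ = ∑ s ∈ Icc r m, (if s = r then w r else 0) := by
        refine Finset.sum_congr rfl fun s hs => ?_
        obtain ⟨hrs, hsm⟩ := mem_Icc.mp hs
        rw [← Finset.mul_sum]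
        have hidx : ∑ j ∈ Icc r s, (-1:ℝ)^(s-j) * ((k-r).choose (j-r):ℝ) * ((k-j).choose (s-j):ℝ)
            = ∑ t ∈ range ((s-r)+1), (-1:ℝ)^((s-r)-t) * ((k-r).choose t : ℝ)
                * (((k-r)-t).choose ((s-r)-t) : ℝ) := by
          rw [aux_Icc_range]
          have he : s + 1 - r = s - r + 1 := by omega
          rw [he]
          refine Finset.sum_congr rfl fun t _ => ?_
          have h1 : r + t - r = t := by omega
          have h2 : k - (r+t) = k - r - t := by omega
          have h3 : s - (r+t) = s - r - t := by omega
          have h4 : s - r - t = s - (r + t) := by omega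
          rw [h1, h2, h3]
        rw [hidx, aux_orth2 (k-r) (s-r) (by omega)]
        by_cases hsr : s = r
        · subst hsr
          have : s - s = 0 := by omega
          rw [this, if_pos rfl, if_pos rfl, mul_one]
        · have h0 : ¬ (s - r = 0) := by omega
          rw [if_neg h0, if_neg hsr, mul_zero]
    _ = w r := by
        rw [Finset.sum_ite_eq' (Icc r m) r (fun _ => w r)]
        simp [mem_Icc, hrm]


private lemma aux_mod_two_mul (n q : ℕ) (hq : 0 < q) :
    n % (2*q) = 2 * (n/2 % q) + n % 2 := by
  have h1 : (2*(n/2)) % (2*q) = 2 * (n/2 % q) := Nat.mul_mod_mul_left 2 (n/2) q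
  have h3 : n/2 % q < q := Nat.mod_lt _ hq
  have h4 : n % 2 < 2 := Nat.mod_lt _ (by norm_num)
  calc n % (2*q) = (2*(n/2) + n%2) % (2*q) := by rw [Nat.div_add_mod]
    _ = ((2*(n/2)) % (2*q) + n%2) % (2*q) := by
        rw [Nat.add_mod, Nat.mod_eq_of_lt (show n%2 < 2*q by omega)]
    _ = 2 * (n/2 % q) + n % 2 := by
        rw [h1]; exact Nat.mod_eq_of_lt (by omega)

private lemma aux_mod_pred {M n : ℕ} (hM : 0 < M) : n % M = M - 1 ↔ M ∣ n + 1 := by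
  constructor
  · intro h
    have hd := Nat.div_add_mod n M
    have e : M * (n/M + 1) = M * (n/M) + M := by ring
    exact ⟨n / M + 1, by omega⟩
  · rintro ⟨t, ht⟩
    have ht1 : 1 ≤ t := by
      rcases Nat.eq_zero_or_pos t with rfl | h
      · omega
      · exact h
    have e : M * t = M * (t-1) + M := by
      calc M * t = M * ((t-1)+1) := by rw [Nat.sub_add_cancel ht1]
        _ = M * (t-1) + M := by ring
    have hn : n = M * (t-1) + (M-1) := by omega
    rw [hn, Nat.mul_add_mod]
    exact Nat.mod_eq_of_lt (by omega)

private lemma aux_choose_pow_odd (b : ℕ) : ∀ n : ℕ, Odd (n.choose (2^b - 1)) ↔ n % 2^b = 2^b - 1 := by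
  induction b with
  | zero => intro n; simp [Nat.mod_one]
  | succ b ih =>
    intro n
    have hq : 0 < 2^b := pow_pos (by norm_num) b
    have hpow : (2:ℕ)^(b+1) = 2*2^b := by ring
    have key := Choose.choose_modEq_choose_mod_mul_choose_div_nat (p := 2) (n := n) (k := 2^(b+1)-1)
    have hK2 : (2^(b+1)-1) % 2 = 1 := by omega
    have hKd : (2^(b+1)-1) / 2 = 2^b - 1 := by omega
    rw [hK2, hKd, Nat.choose_one_right] at key
    have hstep : Odd (n.choose (2^(b+1)-1)) ↔ (n % 2 = 1 ∧ (n/2) % 2^b = 2^b - 1) := by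
      rw [Nat.odd_iff, key, ← Nat.odd_iff, Nat.odd_mul, ih, Nat.odd_iff,
        Nat.mod_mod_of_dvd n (dvd_refl 2)]
    rw [hstep, hpow]
    have hmod := aux_mod_two_mul n (2^b) hq
    have h3 : n/2 % 2^b < 2^b := Nat.mod_lt _ hq
    have h4 : n % 2 < 2 := Nat.mod_lt _ (by norm_num)
    omega

private lemma aux_padic_char (x a : ℕ) :
    2^(a+1) ∣ (x + 2^a + 1) ↔ padicValNat 2 (x+1) = a := by
  have hx : x + 1 ≠ 0 := by omega
  have hd : 2^(padicValNat 2 (x+1)) ∣ x+1 := pow_padicValNat_dvd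
  have hnd : ¬ 2^(padicValNat 2 (x+1)+1) ∣ x+1 := pow_succ_padicValNat_not_dvd hx
  have hpos : ∀ c : ℕ, 0 < 2^c := fun c => pow_pos (by norm_num) c
  constructor
  · intro h
    by_contra hne
    rcases Nat.lt_or_ge a (padicValNat 2 (x+1)) with hlt | hge
    · have h1 : 2^(a+1) ∣ x+1 := dvd_trans (pow_dvd_pow 2 (by omega)) hd
      have e : x + 2^a + 1 - (x+1) = 2^a := by omega
      have h2 : (2:ℕ)^(a+1) ∣ 2^a := by
        have := Nat.dvd_sub h h1
        rwa [e] at this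
      have h5 := Nat.le_of_dvd (hpos a) h2
      have h6 : (2:ℕ)^a < 2^(a+1) := by
        have : (2:ℕ)^(a+1) = 2*2^a := by ring
        have := hpos a; omega
      omega
    · have hva : padicValNat 2 (x+1) < a := by omega
      have h1 : (2:ℕ)^(padicValNat 2 (x+1)+1) ∣ x + 2^a + 1 :=
        dvd_trans (pow_dvd_pow 2 (by omega)) h
      have h2 : (2:ℕ)^(padicValNat 2 (x+1)+1) ∣ 2^a := pow_dvd_pow 2 (by omega)
      have h3 : (2:ℕ)^(padicValNat 2 (x+1)+1) ∣ x+1 := by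
        have h5 := Nat.dvd_sub h1 h2
        rwa [show x + 2^a + 1 - 2^a = x+1 from by omega] at h5
      exact hnd h3
  · intro h
    rw [h] at hd hnd
    obtain ⟨u, hu⟩ := hd
    have hu_odd : u % 2 = 1 := by
      rcases Nat.even_or_odd u with he | ho
      · exfalso
        obtain ⟨t, ht⟩ := he
        exact hnd ⟨t, by rw [hu, ht]; ring⟩
      · exact Nat.odd_iff.mp ho
    refine ⟨(u+1)/2, ?_⟩
    have he : u + 1 = 2*((u+1)/2) := by omega
    calc x + 2^a + 1 = 2^a * u + 2^a := by omega
      _ = 2^a * (u+1) := by ring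
      _ = 2^a * (2*((u+1)/2)) := by rw [← he]
      _ = 2^(a+1) * ((u+1)/2) := by ring

private lemma aux_NLodd (x a : ℕ) :
    Odd ((x + 2^a).choose (2*2^a - 1)) ↔ padicValNat 2 (x+1) = a := by
  have h2 : 2*2^a = 2^(a+1) := by ring
  rw [h2, aux_choose_pow_odd (a+1) (x + 2^a),
    aux_mod_pred (pow_pos (by norm_num) (a+1))]
  exact aux_padic_char x a

private lemma aux_zmod_nat (n : ℕ) : ((n : ZMod 2) = 1) ↔ Odd n := by
  have h01 : ∀ u : ZMod 2, u = 0 ∨ u = 1 := by decide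
  constructor
  · intro h
    rw [← Nat.not_even_iff_odd]
    intro he
    have : (n : ZMod 2) = 0 := (ZMod.natCast_eq_zero_iff n 2).mpr he.two_dvd
    rw [this] at h
    exact absurd h (by decide)
  · intro h
    rcases h01 (n : ZMod 2) with h0 | h1
    · exfalso
      have := (ZMod.natCast_eq_zero_iff n 2).mp h0
      rw [Nat.odd_iff] at h
      omega
    · exact h1

private lemma aux_zmod_int (z : ℤ) : ((z : ZMod 2) = 1) ↔ Odd z := by
  have h01 : ∀ u : ZMod 2, u = 0 ∨ u = 1 := by decide
  constructor
  · intro h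
    rw [← Int.not_even_iff_odd]
    intro he
    have : (z : ZMod 2) = 0 := (ZMod.intCast_zmod_eq_zero_iff_dvd z 2).mpr he.two_dvd
    rw [this] at h
    exact absurd h (by decide)
  · intro h
    rcases h01 (z : ZMod 2) with h0 | h1
    · exfalso
      have := (ZMod.intCast_zmod_eq_zero_iff_dvd z 2).mp h0
      rw [Int.odd_iff] at h
      omega
    · exact h1

private lemma aux_zmod_int_parity (z : ℤ) :
    (z : ZMod 2) = if Odd z then 1 else 0 := by
  split_ifs with h
  · exact (aux_zmod_int z).mpr h
  · rw [Int.not_odd_iff_even] at h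
    exact (ZMod.intCast_zmod_eq_zero_iff_dvd z 2).mpr h.two_dvd

private lemma aux_NLz (x a : ℕ) :
    (((x + 2^a).choose (2*2^a - 1) : ℕ) : ZMod 2)
      = if padicValNat 2 (x+1) = a then 1 else 0 := by
  split_ifs with h
  · exact (aux_zmod_nat _).mpr ((aux_NLodd x a).mpr h)
  · have ho : ¬ Odd ((x + 2^a).choose (2*2^a - 1)) := fun hodd => h ((aux_NLodd x a).mp hodd)
    rw [Nat.not_odd_iff_even] at ho
    exact (ZMod.natCast_eq_zero_iff _ 2).mpr ho.two_dvd

private lemma aux_PS (m x : ℕ) :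
    ∑ j ∈ Icc 1 m, (if ∃ a:ℕ, j = 2^a then (((x+j).choose (2*j-1) : ℕ) : ZMod 2) else 0)
      = if 2^(padicValNat 2 (x+1)) ≤ m then 1 else 0 := by
  have hpos : ∀ c : ℕ, 0 < 2^c := fun c => pow_pos (by norm_num) c
  have step : ∀ j ∈ Icc 1 m,
      (if ∃ a:ℕ, j = 2^a then (((x+j).choose (2*j-1) : ℕ) : ZMod 2) else 0)
        = if j = 2^(padicValNat 2 (x+1)) then 1 else 0 := by
    intro j _
    by_cases hp : ∃ a : ℕ, j = 2^a
    · obtain ⟨a, rfl⟩ := hp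
      rw [if_pos (⟨a, rfl⟩ : ∃ b:ℕ, (2:ℕ)^a = 2^b), aux_NLz]
      have hiff : (padicValNat 2 (x+1) = a) ↔ ((2:ℕ)^a = 2^(padicValNat 2 (x+1))) := by
        constructor
        · intro h; rw [h]
        · intro h; exact (Nat.pow_right_injective (le_refl 2) h).symm
      by_cases hc : padicValNat 2 (x+1) = a
      · rw [if_pos hc, if_pos (hiff.mp hc)]
      · rw [if_neg hc, if_neg (fun hh => hc (hiff.mpr hh))]
    · rw [if_neg hp, if_neg (fun h => hp ⟨padicValNat 2 (x+1), h⟩)]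
  rw [Finset.sum_congr rfl step,
    Finset.sum_ite_eq' (Icc 1 m) (2^(padicValNat 2 (x+1))) (fun _ => (1 : ZMod 2))]
  have h1 : 1 ≤ 2^(padicValNat 2 (x+1)) := hpos _
  by_cases hle : 2^(padicValNat 2 (x+1)) ≤ m
  · rw [if_pos (mem_Icc.mpr ⟨h1, hle⟩), if_pos hle]
  · rw [if_neg (fun hmem => hle (mem_Icc.mp hmem).2), if_neg hle]


private lemma aux_PF {k m : ℕ} (hk : 1 ≤ k) (hm1 : 1 ≤ m) (hm2 : m ≤ k) (c : ℕ → ℤ)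
    (hz : ∀ x, x < k → Odd (∑ j ∈ Icc 1 m, c j * ((x+j).choose (2*j-1) : ℤ))) :
    2^(Nat.log 2 k) ≤ m ∧ ∀ j, 1 ≤ j → j ≤ m → (Odd (c j) ↔ ∃ a:ℕ, j = 2^a) := by
  have hz' : ∀ x, x < k →
      ∑ j ∈ Icc 1 m, (c j : ZMod 2) * (((x+j).choose (2*j-1) : ℕ) : ZMod 2) = 1 := by
    intro x hx
    have h := (aux_zmod_int (∑ j ∈ Icc 1 m, c j * ((x+j).choose (2*j-1) : ℤ))).mpr (hz x hx)
    push_cast at h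
    exact h
  have key : ∀ j, 1 ≤ j → j ≤ m → ((c j : ZMod 2)) = (if ∃ a:ℕ, j = 2^a then 1 else 0) := by
    intro j
    induction j using Nat.strong_induction_on with
    | _ j ih =>
      intro hj1 hjm
      have hE := hz' (j-1) (by omega)
      have hP := aux_PS m (j-1)
      rw [show (j-1) + 1 = j from by omega] at hP
      have hpowle : 2^(padicValNat 2 j) ≤ m :=
        le_trans (Nat.le_of_dvd (by omega) pow_padicValNat_dvd) hjm
      rw [if_pos hpowle] at hP
      have hsum : ∑ i ∈ Icc 1 m,
          ((c i : ZMod 2) - (if ∃ a:ℕ, i = 2^a then 1 else 0))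
            * (((j-1+i).choose (2*i-1) : ℕ) : ZMod 2) = 0 := by
        have expand : ∀ i ∈ Icc 1 m,
            ((c i : ZMod 2) - (if ∃ a:ℕ, i = 2^a then 1 else 0))
              * (((j-1+i).choose (2*i-1) : ℕ) : ZMod 2)
            = (c i : ZMod 2) * (((j-1+i).choose (2*i-1) : ℕ) : ZMod 2)
              - (if ∃ a:ℕ, i = 2^a then (((j-1+i).choose (2*i-1) : ℕ) : ZMod 2) else 0) := by
          intro i _
          by_cases hp : ∃ a:ℕ, i = 2^a
          · rw [if_pos hp, if_pos hp]; ring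
          · rw [if_neg hp, if_neg hp]; ring
        rw [Finset.sum_congr rfl expand, Finset.sum_sub_distrib, hE, hP, sub_self]
      have hterm : ∀ i ∈ Icc 1 m,
          ((c i : ZMod 2) - (if ∃ a:ℕ, i = 2^a then 1 else 0))
            * (((j-1+i).choose (2*i-1) : ℕ) : ZMod 2)
          = if i = j then ((c j : ZMod 2) - (if ∃ a:ℕ, j = 2^a then 1 else 0)) else 0 := by
        intro i hi
        obtain ⟨hi1, him⟩ := mem_Icc.mp hi
        rcases lt_trichotomy i j with h | h | h
        · rw [ih i h hi1 him, sub_self, zero_mul, if_neg (show ¬ i = j by omega)]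
        · subst h
          rw [if_pos rfl]
          have h1 : (i-1+i).choose (2*i-1) = 1 := by
            rw [show i-1+i = 2*i-1 from by omega, Nat.choose_self]
          rw [h1]; simp
        · have h0 : (j-1+i).choose (2*i-1) = 0 := Nat.choose_eq_zero_of_lt (by omega)
          rw [h0, if_neg (show ¬ i = j by omega)]; simp
      rw [Finset.sum_congr rfl hterm, Finset.sum_ite_eq' (Icc 1 m) j
        (fun _ => ((c j : ZMod 2) - (if ∃ a:ℕ, j = 2^a then 1 else 0))),
        if_pos (mem_Icc.mpr ⟨hj1, hjm⟩)] at hsum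
      exact sub_eq_zero.mp hsum
  constructor
  · have hpk : 2^(Nat.log 2 k) ≤ k := Nat.pow_log_le_self 2 (by omega)
    have hE := hz' (2^(Nat.log 2 k) - 1) (by omega)
    have conv1 : ∀ i ∈ Icc 1 m,
        (c i : ZMod 2) * (((2^(Nat.log 2 k) - 1 + i).choose (2*i-1) : ℕ) : ZMod 2)
        = (if ∃ a:ℕ, i = 2^a
            then (((2^(Nat.log 2 k) - 1 + i).choose (2*i-1) : ℕ) : ZMod 2) else 0) := by
      intro i hi
      rw [key i (mem_Icc.mp hi).1 (mem_Icc.mp hi).2]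
      by_cases hp : ∃ a:ℕ, i = 2^a
      · rw [if_pos hp, if_pos hp, one_mul]
      · rw [if_neg hp, if_neg hp, zero_mul]
    rw [Finset.sum_congr rfl conv1, aux_PS m (2^(Nat.log 2 k) - 1),
      show 2^(Nat.log 2 k) - 1 + 1 = 2^(Nat.log 2 k) from by
        have : 0 < 2^(Nat.log 2 k) := pow_pos (by norm_num) _; omega,
      padicValNat.prime_pow] at hE
    by_contra hle
    rw [if_neg hle] at hE
    exact absurd hE (by decide)
  · intro j hj1 hjm
    have hkey := key j hj1 hjm
    rw [← aux_zmod_int, hkey]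
    by_cases hp : ∃ a:ℕ, j = 2^a
    · simp [hp]
    · simp [hp]

private lemma aux_PSuff {k m : ℕ} (hk : 1 ≤ k) (hm2 : m ≤ k)
    (hLm : 2^(Nat.log 2 k) ≤ m) (c : ℕ → ℤ)
    (hc : ∀ j, 1 ≤ j → j ≤ m → (Odd (c j) ↔ ∃ a:ℕ, j = 2^a)) :
    ∀ x, x < k → Odd (∑ j ∈ Icc 1 m, c j * ((x+j).choose (2*j-1) : ℤ)) := by
  intro x hx
  rw [← aux_zmod_int]
  push_cast
  have step : ∀ j ∈ Icc 1 m,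
      (c j : ZMod 2) * (((x+j).choose (2*j-1) : ℕ) : ZMod 2)
      = (if ∃ a:ℕ, j = 2^a then (((x+j).choose (2*j-1) : ℕ) : ZMod 2) else 0) := by
    intro j hj
    obtain ⟨h1, h2⟩ := mem_Icc.mp hj
    rw [aux_zmod_int_parity (c j)]
    by_cases hp : ∃ a:ℕ, j = 2^a
    · rw [if_pos hp, if_pos ((hc j h1 h2).mpr hp), one_mul]
    · rw [if_neg hp, if_neg (fun ho => hp ((hc j h1 h2).mp ho)), zero_mul]
  rw [Finset.sum_congr rfl step, aux_PS m x]
  have hv : 2^(padicValNat 2 (x+1)) ≤ m := by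
    have hd : 2^(padicValNat 2 (x+1)) ∣ x+1 := pow_padicValNat_dvd
    have h1 : 2^(padicValNat 2 (x+1)) ≤ x+1 := Nat.le_of_dvd (by omega) hd
    have h2 : 2^(padicValNat 2 (x+1)) ≤ k := by omega
    have h3 : padicValNat 2 (x+1) ≤ Nat.log 2 k :=
      (Nat.le_log_iff_pow_le (by norm_num) (by omega)).mpr h2
    exact le_trans (Nat.pow_le_pow_right (by norm_num) h3) hLm
  rw [if_pos hv]

/-- Characterization of perfect state transfer at time `τ` on weighted graphs of the
Johnson scheme `J(2k,k)`: all scaled eigenvalue differences `τ(f(x+1) - f(x))` are odd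
multiples of `π` iff `m ≥ 2^{⌊log₂ k⌋}` and the weights come from integers `c_j` that
are odd exactly at powers of `2`. -/
theorem stmt_14 (k m : ℕ) (hk : 1 ≤ k) (hm1 : 1 ≤ m) (hm2 : m ≤ k)
    (τ : ℝ) (hτ : 0 < τ) (w : ℕ → ℝ) (f : ℕ → ℝ)
    (hf : ∀ x, f x = ∑ r ∈ Finset.range (m + 1), w r *
        ∑ j ∈ Finset.range (r + 1), (-1 : ℝ) ^ (r - j) *
          (Nat.choose (2 * j) j : ℝ) * (Nat.choose (k - j) (r - j) : ℝ) *
          (Nat.choose (x + j) (2 * j) : ℝ)) :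
    (∀ x < k, ∃ z : ℤ, Odd z ∧ τ * (f (x + 1) - f x) = (z : ℝ) * Real.pi) ↔
      (2 ^ (Nat.log 2 k) ≤ m ∧
        ∃ c : ℕ → ℤ,
          (∀ j, 1 ≤ j → j ≤ m → (Odd (c j) ↔ ∃ a : ℕ, j = 2 ^ a)) ∧
          (∀ r, 1 ≤ r → r ≤ m →
            w r = (Real.pi / τ) * ∑ j ∈ Finset.Icc r m,
              ((c j : ℝ) / (Nat.choose (2 * j) j : ℝ)) *
                (Nat.choose (k - r) (j - r) : ℝ))) := by
  have hπ : Real.pi ≠ 0 := Real.pi_ne_zero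
  have hπpos : 0 < Real.pi := Real.pi_pos
  have hτ0 : τ ≠ 0 := ne_of_gt hτ
  obtain ⟨γ, hwγ, hD⟩ : ∃ γ : ℕ → ℝ,
      (∀ r ∈ Icc 1 m, w r = ∑ j ∈ Icc r m,
          γ j / ((2*j).choose j : ℝ) * ((k-r).choose (j-r) : ℝ)) ∧
      (∀ x, f (x+1) - f x = ∑ j ∈ Icc 1 m, γ j * ((x+j).choose (2*j-1) : ℝ)) := by
    refine ⟨fun j => ((2*j).choose j : ℝ) *
        ∑ s ∈ Icc j m, (-1:ℝ)^(s-j) * ((k-j).choose (s-j) : ℝ) * w s,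
      fun r hr => aux_L2 hm2 w r hr, fun x => ?_⟩
    rw [aux_diff w f hf x]
    exact aux_L1 hm2 _ w (fun r hr => aux_L2 hm2 w r hr) x
  constructor
  · intro h
    have hzeq : ∀ x, x < k → ∃ z : ℤ, Odd z ∧
        ∑ j ∈ Icc 1 m, (γ j * (τ/Real.pi)) * ((x+j).choose (2*j-1) : ℝ) = (z:ℝ) := by
      intro x hx
      obtain ⟨z, hzo, hze⟩ := h x hx
      refine ⟨z, hzo, ?_⟩
      rw [hD x] at hze
      have e1 : ∑ j ∈ Icc 1 m, (γ j * (τ/Real.pi)) * ((x+j).choose (2*j-1) : ℝ)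
          = (τ/Real.pi) * ∑ j ∈ Icc 1 m, γ j * ((x+j).choose (2*j-1) : ℝ) := by
        rw [Finset.mul_sum]
        exact Finset.sum_congr rfl fun j _ => by ring
      have e2 : ∑ j ∈ Icc 1 m, γ j * ((x+j).choose (2*j-1) : ℝ) = (z:ℝ) * Real.pi / τ := by
        field_simp at hze ⊢
        linarith
      rw [e1, e2]
      field_simp
    have hint : ∀ j, 1 ≤ j → j ≤ m → ∃ z : ℤ, γ j * (τ/Real.pi) = (z:ℝ) := by
      intro j
      induction j using Nat.strong_induction_on with
      | _ j ih =>
        intro hj1 hjm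
        obtain ⟨jj, rfl⟩ : ∃ jj, j = jj + 1 := ⟨j-1, by omega⟩
        obtain ⟨z, _, hze⟩ := hzeq jj (by omega)
        have h1 : ∑ i ∈ Icc 1 m, (γ i * (τ/Real.pi)) * ((jj+i).choose (2*i-1) : ℝ)
            = ∑ i ∈ Icc 1 (jj+1), (γ i * (τ/Real.pi)) * ((jj+i).choose (2*i-1) : ℝ) := by
          refine (Finset.sum_subset (Finset.Icc_subset_Icc le_rfl hjm) ?_).symm
          intro i hi hni
          have : (jj+i).choose (2*i-1) = 0 := by
            refine Nat.choose_eq_zero_of_lt ?_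
            simp only [mem_Icc] at hi hni
            omega
          rw [this]
          simp
        have h2 : ∑ i ∈ Icc 1 (jj+1), (γ i * (τ/Real.pi)) * ((jj+i).choose (2*i-1) : ℝ)
            = (∑ i ∈ Icc 1 jj, (γ i * (τ/Real.pi)) * ((jj+i).choose (2*i-1) : ℝ))
              + (γ (jj+1) * (τ/Real.pi)) * ((jj+(jj+1)).choose (2*(jj+1)-1) : ℝ) :=
          Finset.sum_Icc_succ_top (by omega) _
        have h3 : (jj+(jj+1)).choose (2*(jj+1)-1) = 1 := by
          rw [show 2*(jj+1)-1 = jj+(jj+1) from by omega, Nat.choose_self]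
        have hmem : ∑ i ∈ Icc 1 jj, (γ i * (τ/Real.pi)) * ((jj+i).choose (2*i-1) : ℝ)
            ∈ (Int.castRingHom ℝ).range := by
          refine Subring.sum_mem _ fun i hi => ?_
          obtain ⟨hi1, hi2⟩ := mem_Icc.mp hi
          obtain ⟨zi, hzi⟩ := ih i (by omega) hi1 (by omega)
          refine Subring.mul_mem _ ⟨zi, hzi.symm⟩ ⟨((jj+i).choose (2*i-1) : ℤ), ?_⟩
          push_cast
          rfl
        have hval : γ (jj+1) * (τ/Real.pi)
            = (z:ℝ) - ∑ i ∈ Icc 1 jj, (γ i * (τ/Real.pi)) * ((jj+i).choose (2*i-1) : ℝ) := by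
          rw [h1, h2, h3] at hze
          push_cast at hze ⊢
          linarith
        have : γ (jj+1) * (τ/Real.pi) ∈ (Int.castRingHom ℝ).range := by
          rw [hval]
          exact Subring.sub_mem _ ⟨z, rfl⟩ hmem
        obtain ⟨n, hn⟩ := this
        exact ⟨n, hn.symm⟩
    have hint' : ∀ j, ∃ z : ℤ, (1 ≤ j → j ≤ m → γ j * (τ/Real.pi) = (z:ℝ)) := by
      intro j
      by_cases hj : 1 ≤ j ∧ j ≤ m
      · obtain ⟨z, hz⟩ := hint j hj.1 hj.2
        exact ⟨z, fun _ _ => hz⟩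
      · exact ⟨0, fun h1 h2 => absurd ⟨h1, h2⟩ hj⟩
    choose c hc using hint'
    have hodd : ∀ x, x < k → Odd (∑ j ∈ Icc 1 m, c j * ((x+j).choose (2*j-1) : ℤ)) := by
      intro x hx
      obtain ⟨z, hzo, hze⟩ := hzeq x hx
      have hcast : ((∑ j ∈ Icc 1 m, c j * ((x+j).choose (2*j-1) : ℤ) : ℤ) : ℝ) = (z:ℝ) := by
        push_cast
        rw [← hze]
        exact Finset.sum_congr rfl fun j hj =>
          by rw [← hc j (mem_Icc.mp hj).1 (mem_Icc.mp hj).2]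
      have : (∑ j ∈ Icc 1 m, c j * ((x+j).choose (2*j-1) : ℤ)) = z := by exact_mod_cast hcast
      rw [this]
      exact hzo
    obtain ⟨hbound, hpar⟩ := aux_PF hk hm1 hm2 c hodd
    refine ⟨hbound, c, hpar, ?_⟩
    intro r hr1 hr2
    rw [hwγ r (mem_Icc.mpr ⟨hr1, hr2⟩), Finset.mul_sum]
    refine Finset.sum_congr rfl fun j hj => ?_
    obtain ⟨hrj, hjm⟩ := mem_Icc.mp hj
    have hγj : γ j = (Real.pi/τ) * (c j : ℝ) := by
      have h5 := hc j (le_trans hr1 hrj) hjm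
      field_simp at h5 ⊢
      linarith
    rw [hγj]
    ring
  · rintro ⟨hbound, c, hcpar, hcw⟩ x hx
    refine ⟨∑ j ∈ Icc 1 m, c j * ((x+j).choose (2*j-1) : ℤ),
      aux_PSuff hk hm2 hbound c hcpar x hx, ?_⟩
    have hD2 : f (x+1) - f x
        = ∑ j ∈ Icc 1 m, ((Real.pi/τ) * (c j : ℝ)) * ((x+j).choose (2*j-1) : ℝ) := by
      rw [aux_diff w f hf x]
      refine aux_L1 hm2 (fun j => (Real.pi/τ) * (c j : ℝ)) w (fun r hr => ?_) x
      rw [hcw r (mem_Icc.mp hr).1 (mem_Icc.mp hr).2, Finset.mul_sum]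
      exact Finset.sum_congr rfl fun j _ => by ring
    rw [hD2, Finset.mul_sum]
    push_cast
    rw [Finset.sum_mul]
    refine Finset.sum_congr rfl fun j _ => ?_
    field_simp
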